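/- Let A ∈ ℤ^{m×n} with 1 ≤ m < n satisfy the regularity assumptions, let v = A·1, and let L_A^⊥ = {z ∈ ℤ^n : A z = 0}. Then the covering radius satisfies μ_1(P(A, v) − 1, L_A^⊥) ≤ ((n−m)/2)·M(A), where M(A) is the maximal absolute value of the m×m minors of A and P(A, v) − 1 is the translate of the knapsack polytope P(A, v) by the negative of the all-ones vector. -/

import Mathlib

open scoped BigOperators
open Matrix

noncomputable section

/-- The real matrix obtained from an integer matrix. -/
def Rmat {m n : ℕ} (A : Matrix (Fin m) (Fin n) ℤ) : Matrix (Fin m) (Fin n) ℝ :=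
  A.map (Int.cast : ℤ → ℝ)

/-- The real vector obtained from an integer vector. -/
def Rvec {m : ℕ} (b : Fin m → ℤ) : Fin m → ℝ := fun i => (b i : ℝ)

/-- The knapsack polytope P(A,b) = {x ≥ 0 : A x = b}. -/
def knap {m n : ℕ} (A : Matrix (Fin m) (Fin n) ℤ) (b : Fin m → ℝ) : Set (Fin n → ℝ) :=
  {x | (∀ i, 0 ≤ x i) ∧ (Rmat A).mulVec x = b}

/-- The set F_s(A) of integer vectors b for which P(A,b) contains at least s integer points. -/
def feas {m n : ℕ} (s : ℕ) (A : Matrix (Fin m) (Fin n) ℤ) : Set (Fin m → ℤ) :=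
  {b | s ≤ Set.ncard {x : Fin n → ℤ | (∀ i, 0 ≤ x i) ∧ A.mulVec x = b}}

/-- The cone generated by the columns of A. -/
def coneOf {m n : ℕ} (A : Matrix (Fin m) (Fin n) ℤ) : Set (Fin m → ℝ) :=
  {y | ∃ x : Fin n → ℝ, (∀ i, 0 ≤ x i) ∧ (Rmat A).mulVec x = y}

/-- The generalized diagonal s-Frobenius number g_s(A, w). -/
def gDiag {m n : ℕ} (s : ℕ) (A : Matrix (Fin m) (Fin n) ℤ) (w : Fin m → ℝ) : ℝ :=
  sInf {t : ℝ | 0 ≤ t ∧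
    ∀ b : Fin m → ℤ, Rvec b ∈ interior ((fun c => t • w + c) '' coneOf A) → b ∈ feas s A}

/-- v = A·1 is the sum of the columns of A (as a real vector). -/
def vA {m n : ℕ} (A : Matrix (Fin m) (Fin n) ℤ) : Fin m → ℝ :=
  (Rmat A).mulVec (fun _ => 1)

/-- The diagonal s-Frobenius number g_s(A) = g_s(A, A·1). -/
def gFrob {m n : ℕ} (s : ℕ) (A : Matrix (Fin m) (Fin n) ℤ) : ℝ := gDiag s A (vA A)

/-- The regularity assumptions: the m×m minors of A have gcd 1, and the only
nonnegative real solution of A x = 0 is x = 0. -/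
def regular {m n : ℕ} (A : Matrix (Fin m) (Fin n) ℤ) : Prop :=
  Finset.univ.gcd (fun I : Fin m ↪ Fin n => (A.submatrix id ⇑I).det) = 1 ∧
  ∀ x : Fin n → ℝ, (∀ i, 0 ≤ x i) → (Rmat A).mulVec x = 0 → x = 0

/-- The s-covering radius of K with respect to L: the smallest μ > 0 such that every
point of the real span of L lies in y + μK for at least s distinct y ∈ L. -/
def muCov {N : ℕ} (s : ℕ) (K L : Set (Fin N → ℝ)) : ℝ :=
  sInf {μ : ℝ | 0 < μ ∧ ∀ x ∈ Submodule.span ℝ L,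
    ∃ T : Finset (Fin N → ℝ), ↑T ⊆ L ∧ s ≤ T.card ∧ ∀ y ∈ T, ∃ k ∈ K, x = y + μ • k}

/-- The set of absolute values of m×m minors of A. -/
def minorAbs {m n : ℕ} (A : Matrix (Fin m) (Fin n) ℤ) : Set ℤ :=
  {d | ∃ I : Fin m ↪ Fin n, d = |(A.submatrix id ⇑I).det|}

/-- m(A): the minimal absolute m×m minor of A. -/
def mMin {m n : ℕ} (A : Matrix (Fin m) (Fin n) ℤ) : ℤ := sInf (minorAbs A)

/-- M(A): the maximal absolute m×m minor of A. -/
def mMax {m n : ℕ} (A : Matrix (Fin m) (Fin n) ℤ) : ℤ := sSup (minorAbs A)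

/-- The lattice L_A^⊥ = {z ∈ ℤ^n : A z = 0}, viewed as a subset of ℝ^n. -/
def kerLat {m n : ℕ} (A : Matrix (Fin m) (Fin n) ℤ) : Set (Fin n → ℝ) :=
  {x | ∃ z : Fin n → ℤ, A.mulVec z = 0 ∧ x = Rvec z}

/-- √(det (A Aᵀ)). -/
def sqrtDet {m n : ℕ} (A : Matrix (Fin m) (Fin n) ℤ) : ℝ :=
  Real.sqrt (((A * Aᵀ).det : ℤ) : ℝ)

/-- The s-Frobenius number of a positive primitive integer vector. -/
def sFrob {n : ℕ} (s : ℕ) (a : Fin n → ℤ) : ℤ :=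
  sSup {b : ℤ | Set.ncard {x : Fin n → ℤ | (∀ i, 0 ≤ x i) ∧ ∑ i, a i * x i = b} < s}

/-- The full-rank lattice in ℝ^d with basis the columns of an invertible matrix B. -/
def latSet {d : ℕ} (B : Matrix (Fin d) (Fin d) ℝ) : Set (Fin d → ℝ) :=
  {x | ∃ z : Fin d → ℤ, x = B.mulVec (fun i => (z i : ℝ))}

/-- The absolute s-inhomogeneous minimum ϑ_s(K) = inf_L μ_s(K,L)/det(L)^{1/d}. -/
def theta (s d : ℕ) (K : Set (Fin d → ℝ)) : ℝ :=
  sInf {r : ℝ | ∃ B : Matrix (Fin d) (Fin d) ℝ, B.det ≠ 0 ∧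
    r = muCov s K (latSet B) / |B.det| ^ ((1 : ℝ) / d)}

/-- The standard simplex S_d ⊂ ℝ^d. -/
def stdSimplex' (d : ℕ) : Set (Fin d → ℝ) :=
  {x | (∀ i, 0 ≤ x i) ∧ ∑ i, x i ≤ 1}

lemma mMax_bound {m n : ℕ} (A : Matrix (Fin m) (Fin n) ℤ) (I : Fin m ↪ Fin n) :
    |(A.submatrix id ⇑I).det| ≤ mMax A := by
  have hfin : (minorAbs A).Finite := by
    have h : minorAbs A = Set.range (fun I : Fin m ↪ Fin n => |(A.submatrix id ⇑I).det|) := by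
      ext d; simp [minorAbs, Set.range, eq_comm]
    rw [h]; exact Set.finite_range _
  exact le_csSup hfin.bddAbove ⟨I, rfl⟩

lemma mulVec_extend {m n : ℕ} {R : Type*} [CommRing R] (M : Matrix (Fin m) (Fin n) R)
    (e : Fin m ↪ Fin n) (f : Fin m → R) :
    M.mulVec (Function.extend ⇑e f 0) = (M.submatrix id ⇑e).mulVec f := by
  funext i
  simp only [Matrix.mulVec, dotProduct, Matrix.submatrix_apply, id]
  rw [← Finset.sum_subset (Finset.subset_univ (Finset.univ.map e))
      (fun l _ hl => by
        rw [Function.extend_apply' f (0 : Fin n → R) l (by simpa using hl), Pi.zero_apply,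
          mul_zero])]
  rw [Finset.sum_map]
  exact Finset.sum_congr rfl fun k _ => by rw [e.injective.extend_apply f (0 : Fin n → R) k]

lemma Rmat_mulVec {m n : ℕ} (A : Matrix (Fin m) (Fin n) ℤ) (z : Fin n → ℤ) :
    (Rmat A).mulVec (Rvec z) = Rvec (A.mulVec z) := by
  funext i
  simp only [Rmat, Rvec, Matrix.mulVec, dotProduct, Matrix.map_apply]
  push_cast
  rfl

lemma key_approx {m n : ℕ} (hmn : m < n) (A : Matrix (Fin m) (Fin n) ℤ)
    (I₀ : Fin m ↪ Fin n) (hD : (A.submatrix id ⇑I₀).det ≠ 0)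
    (x : Fin n → ℝ) (hx : (Rmat A).mulVec x = 0) :
    ∃ z : Fin n → ℤ, A.mulVec z = 0 ∧
      ∀ i, |x i - (z i : ℝ)| ≤ ((n : ℝ) - m) / 2 * (mMax A : ℝ) := by
  classical
  set B := A.submatrix id ⇑I₀ with hB
  set D := B.det with hDdef
  set J : Finset (Fin n) := Finset.univ \ Finset.univ.map I₀ with hJ
  have hJmem : ∀ j, j ∈ J ↔ ¬∃ k, I₀ k = j := by
    intro j; simp [hJ]
  have hJcard : J.card = n - m := by
    rw [hJ, Finset.card_sdiff_of_subset (Finset.subset_univ _), Finset.card_map]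
    simp
  -- the basis kernel vectors
  set zv : Fin n → Fin n → ℤ :=
    fun j => Function.extend ⇑I₀ (-(cramer B (fun r => A r j))) 0 + Pi.single j D with hzv
  have hker : ∀ j, A.mulVec (zv j) = 0 := by
    intro j
    rw [hzv]
    simp only [Matrix.mulVec_add]
    rw [mulVec_extend A I₀ _, Matrix.mulVec_single, ← hB, Matrix.mulVec_neg,
      Matrix.mulVec_cramer B (fun r => A r j)]
    funext i
    simp [mul_comm, hDdef]
  have hMpos : (0:ℤ) ≤ mMax A := le_trans (abs_nonneg _) (mMax_bound A I₀)
  have hbound : ∀ j ∈ J, ∀ i, |zv j i| ≤ mMax A := by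
    intro j hj i
    have hjnr : ¬∃ k, I₀ k = j := (hJmem j).1 hj
    by_cases hi : ∃ k, I₀ k = i
    · obtain ⟨k, rfl⟩ := hi
      have hne : I₀ k ≠ j := fun h => hjnr ⟨k, h⟩
      have h1 : zv j (I₀ k) = -(cramer B (fun r => A r j) k) := by
        rw [hzv]
        simp only [Pi.add_apply]
        rw [I₀.injective.extend_apply _ (0 : Fin n → ℤ) k,
          Pi.single_eq_of_ne (M := fun _ => ℤ) hne D]
        simp
      rw [h1, abs_neg, Matrix.cramer_apply]
      -- this is an m×m minor of A
      have hinj : Function.Injective (fun l => if l = k then j else I₀ l) := by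
        intro l l' hll'
        simp only at hll'
        by_cases h1 : l = k <;> by_cases h2 : l' = k
        · rw [h1, h2]
        · rw [if_pos h1, if_neg h2] at hll'; exact absurd ⟨l', hll'.symm⟩ hjnr
        · rw [if_neg h1, if_pos h2] at hll'; exact absurd ⟨l, hll'⟩ hjnr
        · rw [if_neg h1, if_neg h2] at hll'; exact I₀.injective hll'
      have heq : B.updateCol k (fun r => A r j) =
          A.submatrix id ⇑(⟨fun l => if l = k then j else I₀ l, hinj⟩ : Fin m ↪ Fin n) := by
        funext r l
        simp only [Matrix.updateCol_apply, Matrix.submatrix_apply, id,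
          Function.Embedding.coeFn_mk, hB]
        by_cases h : l = k <;> simp [h]
      rw [heq]
      exact mMax_bound A _
    · have h1 : zv j i = (Pi.single j D : Fin n → ℤ) i := by
        rw [hzv]
        simp only [Pi.add_apply]
        rw [Function.extend_apply' _ (0 : Fin n → ℤ) i hi]
        simp
      rw [h1]
      by_cases h : i = j
      · rw [h, Pi.single_eq_same]; exact mMax_bound A I₀
      · rw [Pi.single_eq_of_ne h]; simpa using hMpos
  -- representation of x
  have hDR : ((D : ℤ) : ℝ) ≠ 0 := Int.cast_ne_zero.mpr hD
  have hrep : ∀ i, x i = ∑ j ∈ J, x j / (D : ℝ) * (zv j i : ℝ) := by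
    set y : Fin n → ℝ := fun i => ∑ j ∈ J, x j / (D : ℝ) * (zv j i : ℝ) with hy
    have hyJ : ∀ j' ∈ J, y j' = x j' := by
      intro j' hj'
      have hj'nr : ¬∃ k, I₀ k = j' := (hJmem j').1 hj'
      show ∑ j ∈ J, x j / (D : ℝ) * (zv j j' : ℝ) = x j'
      rw [Finset.sum_eq_single j']
      · have hDD : zv j' j' = D := by
          rw [hzv]
          simp only [Pi.add_apply]
          rw [Function.extend_apply' _ (0 : Fin n → ℤ) j' hj'nr]
          simp
        rw [hDD, div_mul_cancel₀ _ hDR]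
      · intro j hj hne
        have hzz : zv j j' = 0 := by
          rw [hzv]
          simp only [Pi.add_apply]
          rw [Function.extend_apply' _ (0 : Fin n → ℤ) j' hj'nr,
            Pi.single_eq_of_ne (M := fun _ => ℤ) (Ne.symm hne) D]
          simp
        rw [hzz]
        simp
      · intro h; exact absurd hj' h
    have hyker : (Rmat A).mulVec y = 0 := by
      have hy2 : y = ∑ j ∈ J, (x j / (D : ℝ)) • Rvec (zv j) := by
        funext i
        show ∑ j ∈ J, x j / (D : ℝ) * (zv j i : ℝ) = _
        rw [Finset.sum_apply]
        exact Finset.sum_congr rfl fun j _ => rfl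
      rw [hy2]
      have hml : ∀ v, (Rmat A).mulVec v = (Rmat A).mulVecLin v := fun v => rfl
      rw [hml, map_sum]
      refine Finset.sum_eq_zero fun j hj => ?_
      rw [LinearMap.map_smul]
      have hz0 : (Rmat A).mulVecLin (Rvec (zv j)) = 0 := by
        show (Rmat A).mulVec (Rvec (zv j)) = 0
        rw [Rmat_mulVec, hker j]
        funext i
        simp [Rvec]
      rw [hz0, smul_zero]
    have hxyker : (Rmat A).mulVec (x - y) = 0 := by
      have hml : ∀ v, (Rmat A).mulVec v = (Rmat A).mulVecLin v := fun v => rfl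
      rw [hml, map_sub]
      rw [← hml, ← hml, hx, hyker, sub_zero]
    have hdiff : x - y = Function.extend ⇑I₀ (fun k => (x - y) (I₀ k)) 0 := by
      funext i
      by_cases hi : ∃ k, I₀ k = i
      · obtain ⟨k, rfl⟩ := hi
        rw [I₀.injective.extend_apply]
      · rw [Function.extend_apply' _ (0 : Fin n → ℝ) i hi]
        have hiJ : i ∈ J := (hJmem i).2 hi
        simp [hyJ i hiJ]
    have hkerdiff : ((Rmat A).submatrix id ⇑I₀).mulVec (fun k => (x - y) (I₀ k)) = 0 := by
      rw [← mulVec_extend, ← hdiff]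
      exact hxyker
    have hdetB : ((Rmat A).submatrix id ⇑I₀).det = ((D : ℤ) : ℝ) := by
      have hBm : (Rmat A).submatrix id ⇑I₀ = (Int.castRingHom ℝ).mapMatrix B := by
        funext r l
        simp [Rmat, hB]
      rw [hBm, ← RingHom.map_det]
      rfl
    have hBunit : IsUnit ((Rmat A).submatrix id ⇑I₀).det := by
      rw [hdetB]; exact isUnit_iff_ne_zero.mpr hDR
    have hu0 : (fun k => (x - y) (I₀ k)) = 0 := by
      have h1 := congrArg (fun v => ((Rmat A).submatrix id ⇑I₀)⁻¹.mulVec v) hkerdiff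
      simpa [Matrix.mulVec_mulVec, Matrix.nonsing_inv_mul _ hBunit, Matrix.one_mulVec] using h1
    have hxy0 : x - y = 0 := by
      rw [hdiff, hu0]
      funext i
      by_cases hi : ∃ k, I₀ k = i
      · obtain ⟨k, rfl⟩ := hi
        rw [I₀.injective.extend_apply]
        rfl
      · rw [Function.extend_apply' _ (0 : Fin n → ℝ) i hi]
    intro i
    have h2 := congrFun hxy0 i
    simp only [Pi.sub_apply, Pi.zero_apply, sub_eq_zero] at h2
    exact h2
  -- the rounded lattice point
  refine ⟨fun i => ∑ j ∈ J, round (x j / (D : ℝ)) * zv j i, ?_, ?_⟩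
  · funext i
    have hterm : ∀ j ∈ J, round (x j / (D : ℝ)) * (A.mulVec (zv j) i) = 0 := by
      intro j _; rw [hker j]; simp
    calc A.mulVec (fun i => ∑ j ∈ J, round (x j / (D : ℝ)) * zv j i) i
        = ∑ j ∈ J, round (x j / (D : ℝ)) * (A.mulVec (zv j) i) := by
          simp only [Matrix.mulVec, dotProduct, Finset.mul_sum]
          rw [Finset.sum_comm]
          exact Finset.sum_congr rfl fun j _ => Finset.sum_congr rfl fun l _ => by ring
      _ = 0 := Finset.sum_eq_zero hterm
  · intro i
    have h1 : x i - ((∑ j ∈ J, round (x j / (D : ℝ)) * zv j i : ℤ) : ℝ) =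
        ∑ j ∈ J, (x j / (D : ℝ) - round (x j / (D : ℝ))) * (zv j i : ℝ) := by
      rw [hrep i]
      push_cast
      rw [← Finset.sum_sub_distrib]
      exact Finset.sum_congr rfl fun j _ => by ring
    rw [h1]
    calc |∑ j ∈ J, (x j / (D : ℝ) - round (x j / (D : ℝ))) * (zv j i : ℝ)|
        ≤ ∑ j ∈ J, |(x j / (D : ℝ) - round (x j / (D : ℝ))) * (zv j i : ℝ)| :=
          Finset.abs_sum_le_sum_abs _ _
      _ ≤ ∑ j ∈ J, 1 / 2 * (mMax A : ℝ) := by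
          refine Finset.sum_le_sum fun j hj => ?_
          rw [abs_mul]
          refine mul_le_mul (abs_sub_round _) ?_ (abs_nonneg _) (by norm_num)
          exact_mod_cast hbound j hj i
      _ = (J.card : ℝ) * (1 / 2 * (mMax A : ℝ)) := by
          rw [Finset.sum_const, nsmul_eq_mul]
      _ = ((n : ℝ) - m) / 2 * (mMax A : ℝ) := by
          rw [hJcard]
          rw [Nat.cast_sub hmn.le]
          ring

/-- Upper bound for the covering radius of P(A,v) − 1 in terms of M(A) (Lemma 5). -/
theorem stmt_10 {m n : ℕ} (hm : 1 ≤ m) (hmn : m < n)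
    (A : Matrix (Fin m) (Fin n) ℤ) (hA : regular A) :
    muCov 1 ((fun x => x - fun _ => (1 : ℝ)) '' knap A (vA A)) (kerLat A) ≤
      ((n : ℝ) - m) / 2 * (mMax A : ℝ) := by
  classical
  obtain ⟨I₀, hI₀⟩ : ∃ I : Fin m ↪ Fin n, (A.submatrix id ⇑I).det ≠ 0 := by
    by_contra h
    push_neg at h
    have h0 : Finset.univ.gcd (fun I : Fin m ↪ Fin n => (A.submatrix id ⇑I).det) = 0 :=
      Finset.gcd_eq_zero_iff.mpr fun I _ => h I
    rw [hA.1] at h0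
    exact one_ne_zero h0
  have hM1 : (1 : ℤ) ≤ mMax A := le_trans (Int.one_le_abs hI₀) (mMax_bound A I₀)
  set μ := ((n : ℝ) - m) / 2 * (mMax A : ℝ) with hμ
  have hnm : (0 : ℝ) < (n : ℝ) - m := by
    have h : (m : ℝ) < n := by exact_mod_cast hmn
    linarith
  have hμpos : 0 < μ := by
    apply mul_pos (by linarith)
    exact_mod_cast lt_of_lt_of_le one_pos hM1
  rw [muCov]
  apply csInf_le
  · exact ⟨0, fun μ' hμ' => le_of_lt hμ'.1⟩
  refine ⟨hμpos, fun x hx => ?_⟩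
  have hxker : (Rmat A).mulVec x = 0 := by
    have hsub : Submodule.span ℝ (kerLat A) ≤ LinearMap.ker (Rmat A).mulVecLin := by
      rw [Submodule.span_le]
      intro w hw
      simp only [kerLat, Set.mem_setOf_eq] at hw
      obtain ⟨z, hz, rfl⟩ := hw
      simp only [SetLike.mem_coe, LinearMap.mem_ker]
      show (Rmat A).mulVec (Rvec z) = 0
      rw [Rmat_mulVec, hz]
      funext i
      simp [Rvec]
    have h2 := hsub hx
    simpa [LinearMap.mem_ker] using h2
  obtain ⟨z, hz0, hzb⟩ := key_approx hmn A I₀ hI₀ x hxker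
  have hzR : (Rmat A).mulVec (Rvec z) = 0 := by
    rw [Rmat_mulVec, hz0]
    funext i
    simp [Rvec]
  refine ⟨{Rvec z}, ?_, by simp, ?_⟩
  · intro w hw
    simp only [Finset.coe_singleton, Set.mem_singleton_iff] at hw
    subst hw
    exact ⟨z, hz0, rfl⟩
  · intro y hy
    rw [Finset.mem_singleton] at hy
    subst hy
    refine ⟨fun i => (x i - (z i : ℝ)) / μ,
      ⟨fun i => (x i - (z i : ℝ)) / μ + 1, ⟨?_, ?_⟩, ?_⟩, ?_⟩
    · intro i
      have h1 : -μ ≤ x i - (z i : ℝ) := neg_le_of_abs_le (hzb i)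
      have h2 : (-1 : ℝ) ≤ (x i - (z i : ℝ)) / μ := by
        rw [le_div_iff₀ hμpos]
        linarith
      linarith
    · have hp : (fun i => (x i - (z i : ℝ)) / μ + 1) =
          (1 / μ) • (x - Rvec z) + (fun _ : Fin n => (1 : ℝ)) := by
        funext i
        simp only [Pi.add_apply, Pi.smul_apply, Pi.sub_apply, smul_eq_mul, Rvec]
        ring
      rw [hp]
      have hml : ∀ v, (Rmat A).mulVec v = (Rmat A).mulVecLin v := fun v => rfl
      rw [hml, map_add, LinearMap.map_smul, map_sub, ← hml x, ← hml (Rvec z), hxker, hzR]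
      simp [vA, Matrix.mulVecLin_apply]
    · funext i
      simp
    · funext i
      show x i = (z i : ℝ) + μ * ((x i - (z i : ℝ)) / μ)
      rw [mul_comm, div_mul_cancel₀ _ (ne_of_gt hμpos)]
      ring

end
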